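/- Let λ : V → V be a bijective map on V = V_1 ⊕ ⋯ ⊕ V_m that is additive for both + and the parallel operation ∘ (i.e., λ ∈ H_∘ = GL(V,+) ∩ GL(V,∘)). Then for any key k ∈ V and any ∘-difference Δ, the composition of key-addition (x ↦ x + k) followed by λ maps a pair with ∘-difference Δ to a pair with ∘-difference λ(Δ + k·Δ), where k·Δ := k + Δ + k∘Δ; in particular if Δ ∈ W_∘ then the output ∘-difference is exactly λ(Δ). -/

import Mathlib

/-- `IsElemAb2 z p` : `p` is an elementary abelian 2-group (F_2-vector space)
operation on `V` with identity `z`. -/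
def IsElemAb2 {V : Type*} (z : V) (p : V → V → V) : Prop :=
  (∀ a b, p a b = p b a) ∧ (∀ a b c, p (p a b) c = p a (p b c)) ∧
  (∀ a, p a z = a) ∧ (∀ a, p a a = z)

namespace IsElemAb2

variable {V : Type*} {z : V} {p : V → V → V}

lemma comm (h : IsElemAb2 z p) : ∀ a b, p a b = p b a := h.1
lemma assoc (h : IsElemAb2 z p) : ∀ a b c, p (p a b) c = p a (p b c) := h.2.1
lemma idr (h : IsElemAb2 z p) : ∀ a, p a z = a := h.2.2.1
lemma invv (h : IsElemAb2 z p) : ∀ a, p a a = z := h.2.2.2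

lemma idl (h : IsElemAb2 z p) (a : V) : p z a = a := by rw [h.comm, h.idr]

lemma cancel (h : IsElemAb2 z p) (a b : V) : p a (p a b) = b := by
  rw [← h.assoc, h.invv, h.idl]

/-- `(a+c)+(b+c) = a+b` -/
lemma quot (h : IsElemAb2 z p) (a b c : V) : p (p a c) (p b c) = p a b := by
  rw [h.comm b c, h.assoc, h.cancel]

end IsElemAb2

lemma key_identity {V : Type*} (z : V) (p q : V → V → V)
    (hp : IsElemAb2 z p) (hq : IsElemAb2 z q)
    (hTp : ∀ k : V, ∃ L : V → V, Function.Bijective L ∧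
      (∀ a b, L (q a b) = q (L a) (L b)) ∧ ∃ c, ∀ x, p x k = q (L x) c)
    (hTq : ∀ k : V, ∃ L : V → V, Function.Bijective L ∧
      (∀ a b, L (p a b) = p (L a) (L b)) ∧ ∃ c, ∀ x, q x k = p (L x) c)
    (k Δ x : V) :
    q (p x k) (p (q x Δ) k) = p Δ (p (p k Δ) (q k Δ)) := by
  obtain ⟨L, -, hLq, c, hLc⟩ := hTp k
  obtain ⟨M, -, hMp, c', hMc⟩ := hTq k
  -- the LHS equals L Δ for every x
  have hL : ∀ y : V, q (p y k) (p (q y Δ) k) = L Δ := by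
    intro y
    rw [hLc y, hLc (q y Δ), hq.quot, ← hLq, hq.cancel]
  -- hence (taking y = z)  L Δ = q k (p Δ k)
  have h1 : L Δ = q k (p Δ k) := by
    have := hL z
    rw [hp.idl, hq.idl] at this
    exact this.symm
  -- properties of M
  have hMz : M z = z := by
    have : M (p z z) = p (M z) (M z) := hMp z z
    rw [hp.idr, hp.invv] at this
    exact this
  have hc' : c' = k := by
    have := hMc z
    rw [hMz, hp.idl] at this
    rw [← this, hq.comm, hq.idr]
  have hMk : M k = k := by
    have := hMc k
    rw [hc', hq.invv] at this
    have := congrArg (fun t => p t k) this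
    rw [hp.idl, hp.assoc, hp.invv, hp.idr] at this
    exact this.symm
  have hMΔ : M Δ = p (q Δ k) k := by
    have := hMc Δ
    rw [hc'] at this
    rw [this, hp.assoc, hp.invv, hp.idr]
  -- q k (p Δ k) = M Δ
  have h2 : q k (p Δ k) = M Δ := by
    have := hMc (p Δ k)
    rw [hc', hMp, hMk] at this
    rw [hq.comm, this, hp.assoc, hp.invv, hp.idr]
  -- RHS = M Δ
  have h3 : p Δ (p (p k Δ) (q k Δ)) = M Δ := by
    rw [← hp.assoc, hp.comm k Δ, ← hp.assoc, hp.invv, hp.idl, hMΔ,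
      hq.comm Δ k, hp.comm]
  rw [hL x, h1, h2, h3]

/-- If λ ∈ H_∘ = GL(V,+) ∩ GL(V,∘), then key-addition followed by λ maps a
pair with ∘-difference Δ to a pair with ∘-difference λ(Δ + k·Δ), where
k·Δ = k + Δ + k∘Δ; in particular if Δ is a weak key the output ∘-difference
is exactly λ(Δ).  (The ∘-difference of (u,v) is the unique d with v = u ∘ d,
i.e. u ∘ v.) -/
theorem lambda_difference_propagation (V : Type*) (z : V) (p q : V → V → V)
    (hp : IsElemAb2 z p) (hq : IsElemAb2 z q)
    (hTp : ∀ k : V, ∃ L : V → V, Function.Bijective L ∧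
      (∀ a b, L (q a b) = q (L a) (L b)) ∧ ∃ c, ∀ x, p x k = q (L x) c)
    (hTq : ∀ k : V, ∃ L : V → V, Function.Bijective L ∧
      (∀ a b, L (p a b) = p (L a) (L b)) ∧ ∃ c, ∀ x, q x k = p (L x) c)
    (lam : V → V) (hbij : Function.Bijective lam)
    (haddp : ∀ a b, lam (p a b) = p (lam a) (lam b))
    (haddq : ∀ a b, lam (q a b) = q (lam a) (lam b)) :
    ∀ k Δ x : V,
      q (lam (p x k)) (lam (p (q x Δ) k)) =
        lam (p Δ (p (p k Δ) (q k Δ))) ∧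
      ((∀ y, p y Δ = q y Δ) →
        q (lam (p x k)) (lam (p (q x Δ) k)) = lam Δ) := by
  intro k Δ x
  have hmain : q (lam (p x k)) (lam (p (q x Δ) k)) =
      lam (p Δ (p (p k Δ) (q k Δ))) := by
    rw [← haddq]
    exact congrArg lam (key_identity z p q hp hq hTp hTq k Δ x)
  refine ⟨hmain, fun hw => ?_⟩
  rw [hmain, ← hw k, hp.invv, hp.idr]
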